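/- Let n ≥ 1 and 0 ≤ N ≤ n−1. Let I = (I_1,…,I_n) be a vector of positive reals and, for 1 ≤ m ≤ N+1, let U_m = (U_{m,1},…,U_{m,n−m}) be vectors of positive reals. Then there exist a unique real vector I' = (I'_1,…,I'_n) and unique real vectors U'_m = (U'_{m,1},…,U'_{m,n−m}) for 1 ≤ m ≤ N+1 such that F_{N+1}(U'_{N+1})···F_2(U'_2)F_1(U'_1)E(I) = E(I')F_{N+1}(U_{N+1})···F_2(U_2)F_1(U_1) as n×n real matrices; moreover all entries of I' and of the U'_m are positive. -/

import Mathlib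

/-- Extend a vector `V : Fin m → ℝ` to `ℕ → ℝ` by zero. -/
def padded {m : ℕ} (V : Fin m → ℝ) : ℕ → ℝ :=
  fun t => if h : t < m then V ⟨t, h⟩ else 0

/-- The matrix E(I): diagonal entries I_i, entries 1 on the superdiagonal. -/
def Ematrix (n : ℕ) (I : Fin n → ℝ) : Matrix (Fin n) (Fin n) ℝ :=
  Matrix.of fun r c =>
    if (c : ℕ) = (r : ℕ) then I r else if (c : ℕ) = (r : ℕ) + 1 then 1 else 0

/-- The matrix F_k(V) (1-indexed description: F_k(V)_{ii} = 1,
F_k(V)_{i+1,i} = −V_{i−k+1} for k ≤ i ≤ n−1, other entries 0). -/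
def Fkmatrix (n k : ℕ) (V : Fin (n - k) → ℝ) : Matrix (Fin n) (Fin n) ℝ :=
  Matrix.of fun r c =>
    if (r : ℕ) = (c : ℕ) then 1
    else if (r : ℕ) = (c : ℕ) + 1 ∧ k ≤ (c : ℕ) + 1 then -(padded V ((c : ℕ) + 1 - k))
    else 0

/-- The product F(V_N) ⋯ F(V_1) F(V_0). -/
def prodF1 (n : ℕ) (V : ℕ → Fin (n - 1) → ℝ) : ℕ → Matrix (Fin n) (Fin n) ℝ
  | 0 => Fkmatrix n 1 (V 0)
  | (N+1) => Fkmatrix n 1 (V (N+1)) * prodF1 n V N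

/-- The product F_{N+1}(U_{N+1}) ⋯ F_2(U_2) F_1(U_1), where `U m` stands for
the vector U_{m+1} : Fin (n−(m+1)) → ℝ. -/
def prodFk (n : ℕ) (U : (m : ℕ) → Fin (n - (m+1)) → ℝ) : ℕ → Matrix (Fin n) (Fin n) ℝ
  | 0 => Fkmatrix n 1 (U 0)
  | (N+1) => Fkmatrix n (N+2) (U (N+1)) * prodFk n U N

namespace St10

variable {n : ℕ}

/-- entry of a matrix with ℕ indices, 0 out of bounds -/
def ent (M : Matrix (Fin n) (Fin n) ℝ) (i j : ℕ) : ℝ :=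
  if h : i < n ∧ j < n then M ⟨i, h.1⟩ ⟨j, h.2⟩ else 0

lemma ent_oob {M : Matrix (Fin n) (Fin n) ℝ} {i j : ℕ} (h : n ≤ i ∨ n ≤ j) :
    ent M i j = 0 := by
  unfold ent; rw [dif_neg]; rcases h with h | h <;> omega

lemma ent_apply (M : Matrix (Fin n) (Fin n) ℝ) (i j : Fin n) :
    M i j = ent M i j := by
  unfold ent
  rw [dif_pos ⟨i.2, j.2⟩]

lemma ent_ext {M M' : Matrix (Fin n) (Fin n) ℝ}
    (h : ∀ i j, i < n → j < n → ent M i j = ent M' i j) : M = M' := by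
  ext i j
  have := h i j i.2 j.2
  rwa [← ent_apply, ← ent_apply] at this

lemma ent_sub (A B : Matrix (Fin n) (Fin n) ℝ) (i j : ℕ) :
    ent (A - B) i j = ent A i j - ent B i j := by
  unfold ent
  split_ifs with h
  · simp [Matrix.sub_apply]
  · ring

lemma padded_lt {m : ℕ} (V : Fin m → ℝ) {t : ℕ} (h : t < m) :
    padded V t = V ⟨t, h⟩ := dif_pos h

lemma padded_ge {m : ℕ} (V : Fin m → ℝ) {t : ℕ} (h : m ≤ t) :
    padded V t = 0 := dif_neg (by omega)

lemma padded_nonneg {m : ℕ} {V : Fin m → ℝ} (hV : ∀ i, 0 ≤ V i) (t : ℕ) :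
    0 ≤ padded V t := by
  unfold padded; split_ifs; exacts [hV _, le_refl 0]

/-- generic unit lower bidiagonal matrix with subdiagonal -f -/
def genF (n : ℕ) (f : ℕ → ℝ) : Matrix (Fin n) (Fin n) ℝ :=
  Matrix.of fun r c =>
    if (r : ℕ) = (c : ℕ) then 1
    else if (r : ℕ) = (c : ℕ) + 1 then -(f (c : ℕ)) else 0

def fk (n k : ℕ) (V : Fin (n - k) → ℝ) : ℕ → ℝ :=
  fun i => if k ≤ i + 1 then padded V (i + 1 - k) else 0

lemma Fk_eq_genF (k : ℕ) (V : Fin (n - k) → ℝ) :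
    Fkmatrix n k V = genF n (fk n k V) := by
  ext r c
  simp only [Fkmatrix, genF, Matrix.of_apply, fk]
  by_cases h1 : (r : ℕ) = (c : ℕ)
  · simp [h1]
  · rw [if_neg h1, if_neg h1]
    by_cases h2 : (r : ℕ) = (c : ℕ) + 1
    · by_cases h3 : k ≤ (c : ℕ) + 1
      · rw [if_pos ⟨h2, h3⟩, if_pos h2, if_pos h3]
      · rw [if_neg (by tauto), if_pos h2, if_neg h3, neg_zero]
    · rw [if_neg (by tauto), if_neg h2]

lemma fk_far {k : ℕ} (V : Fin (n - k) → ℝ) {t : ℕ} (h : n ≤ t + 1) :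
    fk n k V t = 0 := by
  unfold fk
  split_ifs with h1
  · exact padded_ge V (by omega)
  · rfl

lemma fk_near {k : ℕ} (V : Fin (n - k) → ℝ) {t : ℕ} (h : t + 1 < k) :
    fk n k V t = 0 := if_neg (by omega)

lemma fk_nonneg {k : ℕ} {V : Fin (n - k) → ℝ} (hV : ∀ t, 0 ≤ padded V t) (t : ℕ) :
    0 ≤ fk n k V t := by
  unfold fk; split_ifs
  exacts [hV _, le_refl 0]

lemma ent_genF_diag (f : ℕ → ℝ) {i : ℕ} (h : i < n) : ent (genF n f) i i = 1 := by
  unfold ent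
  rw [dif_pos ⟨h, h⟩]
  simp [genF]

lemma ent_genF_sub (f : ℕ → ℝ) {j : ℕ} (h : j + 1 < n) :
    ent (genF n f) (j+1) j = -(f j) := by
  unfold ent
  rw [dif_pos ⟨h, by omega⟩]
  simp [genF]

lemma ent_genF_of (f : ℕ → ℝ) {i j : ℕ} (h1 : i ≠ j) (h2 : i ≠ j + 1) :
    ent (genF n f) i j = 0 := by
  unfold ent
  split_ifs with h
  · simp only [genF, Matrix.of_apply]
    rw [if_neg (by simpa using h1), if_neg (by simpa using h2)]
  · rfl

lemma genF_congr {f f' : ℕ → ℝ} (h : ∀ c, c + 1 < n → f c = f' c) :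
    genF n f = genF n f' := by
  ext r c
  simp only [genF, Matrix.of_apply]
  by_cases h1 : (r : ℕ) = (c : ℕ)
  · simp [h1]
  · rw [if_neg h1, if_neg h1]
    by_cases h2 : (r : ℕ) = (c : ℕ) + 1
    · rw [if_pos h2, if_pos h2, h _ (by have := r.2; omega)]
    · rw [if_neg h2, if_neg h2]

lemma genF_eq_Fk {k : ℕ} (hk : 1 ≤ k) (g : ℕ → ℝ)
    (h0 : ∀ t, t + 1 < k → g t = 0) :
    genF n g = Fkmatrix n k (fun t : Fin (n - k) => g ((t : ℕ) + k - 1)) := by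
  rw [Fk_eq_genF]
  apply genF_congr
  intro c hc
  by_cases h2 : k ≤ c + 1
  · unfold fk
    rw [if_pos h2, padded_lt _ (by omega)]
    show g c = g (c + 1 - k + k - 1)
    congr 1
    omega
  · rw [h0 c (by omega)]
    unfold fk
    rw [if_neg h2]

end St10

namespace St10

variable {n : ℕ}

lemma ent_genF_mul (f : ℕ → ℝ) (M : Matrix (Fin n) (Fin n) ℝ) (i j : ℕ) (h : i + 1 < n) :
    ent (genF n f * M) (i+1) j = ent M (i+1) j - f i * ent M i j := by
  by_cases hj : j < n
  · have hi : i < n := by omega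
    unfold ent
    rw [dif_pos ⟨h, hj⟩, dif_pos ⟨h, hj⟩, dif_pos ⟨hi, hj⟩]
    rw [Matrix.mul_apply]
    have key : ∀ s : Fin n, genF n f ⟨i+1, h⟩ s * M s ⟨j, hj⟩ =
        (if s = (⟨i+1, h⟩ : Fin n) then M ⟨i+1, h⟩ ⟨j, hj⟩ else 0) +
        (if s = (⟨i, hi⟩ : Fin n) then -(f i) * M ⟨i, hi⟩ ⟨j, hj⟩ else 0) := by
      rintro ⟨sv, hsv⟩
      simp only [genF, Matrix.of_apply, Fin.mk.injEq]
      by_cases h1 : sv = i + 1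
      · subst h1; simp
      · by_cases h2 : sv = i
        · subst h2; simp [h1]
        · rw [if_neg (by omega), if_neg (by omega), if_neg (by omega), if_neg (by omega)]
          ring
    rw [Finset.sum_congr rfl (fun s _ => key s), Finset.sum_add_distrib]
    simp only [Finset.sum_ite_eq', Finset.mem_univ, if_true]
    ring
  · rw [ent_oob (Or.inr (by omega)), ent_oob (Or.inr (by omega)),
      ent_oob (Or.inr (by omega))]
    ring

lemma ent_genF_mul_zero (f : ℕ → ℝ) (M : Matrix (Fin n) (Fin n) ℝ) (j : ℕ) (h : 0 < n) :
    ent (genF n f * M) 0 j = ent M 0 j := by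
  by_cases hj : j < n
  · unfold ent
    rw [dif_pos ⟨h, hj⟩, dif_pos ⟨h, hj⟩, Matrix.mul_apply]
    have key : ∀ s : Fin n, genF n f ⟨0, h⟩ s * M s ⟨j, hj⟩ =
        (if s = (⟨0, h⟩ : Fin n) then M ⟨0, h⟩ ⟨j, hj⟩ else 0) := by
      rintro ⟨sv, hsv⟩
      simp only [genF, Matrix.of_apply, Fin.mk.injEq]
      by_cases h1 : sv = 0
      · subst h1; simp
      · rw [if_neg (by omega), if_neg (by omega), if_neg (by omega)]
        ring
    rw [Finset.sum_congr rfl (fun s _ => key s)]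
    simp only [Finset.sum_ite_eq', Finset.mem_univ, if_true]
  · rw [ent_oob (Or.inr (by omega)), ent_oob (Or.inr (by omega))]

lemma ent_mul_E (M : Matrix (Fin n) (Fin n) ℝ) (I : Fin n → ℝ) (i j : ℕ) (h : j + 1 < n) :
    ent (M * Ematrix n I) i (j+1) = ent M i (j+1) * padded I (j+1) + ent M i j := by
  by_cases hi : i < n
  · have hj : j < n := by omega
    unfold ent
    rw [dif_pos ⟨hi, h⟩, dif_pos ⟨hi, h⟩, dif_pos ⟨hi, hj⟩, Matrix.mul_apply,
      padded_lt I h]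
    have key : ∀ s : Fin n, M ⟨i, hi⟩ s * Ematrix n I s ⟨j+1, h⟩ =
        (if s = (⟨j+1, h⟩ : Fin n) then M ⟨i, hi⟩ ⟨j+1, h⟩ * I ⟨j+1, h⟩ else 0) +
        (if s = (⟨j, hj⟩ : Fin n) then M ⟨i, hi⟩ ⟨j, hj⟩ else 0) := by
      rintro ⟨sv, hsv⟩
      simp only [Ematrix, Matrix.of_apply, Fin.mk.injEq]
      by_cases h1 : sv = j + 1
      · subst h1; simp
      · by_cases h2 : sv = j
        · subst h2; simp [h1]
        · rw [if_neg (by omega), if_neg (by omega), if_neg (by omega), if_neg (by omega)]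
          ring
    rw [Finset.sum_congr rfl (fun s _ => key s), Finset.sum_add_distrib]
    simp only [Finset.sum_ite_eq', Finset.mem_univ, if_true]
  · rw [ent_oob (Or.inl (by omega)), ent_oob (Or.inl (by omega)),
      ent_oob (Or.inl (by omega))]
    ring

lemma ent_mul_E_zero (M : Matrix (Fin n) (Fin n) ℝ) (I : Fin n → ℝ) (i : ℕ) (h : 0 < n) :
    ent (M * Ematrix n I) i 0 = ent M i 0 * padded I 0 := by
  by_cases hi : i < n
  · unfold ent
    rw [dif_pos ⟨hi, h⟩, dif_pos ⟨hi, h⟩, Matrix.mul_apply, padded_lt I h]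
    have key : ∀ s : Fin n, M ⟨i, hi⟩ s * Ematrix n I s ⟨0, h⟩ =
        (if s = (⟨0, h⟩ : Fin n) then M ⟨i, hi⟩ ⟨0, h⟩ * I ⟨0, h⟩ else 0) := by
      rintro ⟨sv, hsv⟩
      simp only [Ematrix, Matrix.of_apply, Fin.mk.injEq]
      by_cases h1 : sv = 0
      · subst h1; simp
      · rw [if_neg (by omega), if_neg (by omega), if_neg (by omega)]
        ring
    rw [Finset.sum_congr rfl (fun s _ => key s)]
    simp only [Finset.sum_ite_eq', Finset.mem_univ, if_true]
  · rw [ent_oob (Or.inl (by omega)), ent_oob (Or.inl (by omega))]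
    ring

lemma ent_E_mul (I : Fin n → ℝ) (M : Matrix (Fin n) (Fin n) ℝ) (i j : ℕ) :
    ent (Ematrix n I * M) i j = padded I i * ent M i j + ent M (i+1) j := by
  by_cases hi : i < n
  · by_cases hj : j < n
    · unfold ent
      rw [dif_pos ⟨hi, hj⟩, dif_pos ⟨hi, hj⟩, Matrix.mul_apply, padded_lt I hi]
      by_cases hi1 : i + 1 < n
      · rw [dif_pos ⟨hi1, hj⟩]
        have key : ∀ s : Fin n, Ematrix n I ⟨i, hi⟩ s * M s ⟨j, hj⟩ =
            (if s = (⟨i, hi⟩ : Fin n) then I ⟨i, hi⟩ * M ⟨i, hi⟩ ⟨j, hj⟩ else 0) +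
            (if s = (⟨i+1, hi1⟩ : Fin n) then M ⟨i+1, hi1⟩ ⟨j, hj⟩ else 0) := by
          rintro ⟨sv, hsv⟩
          simp only [Ematrix, Matrix.of_apply, Fin.mk.injEq]
          by_cases h1 : sv = i
          · subst h1; simp
          · by_cases h2 : sv = i + 1
            · subst h2; simp [h1]
            · rw [if_neg (by omega), if_neg (by omega), if_neg (by omega),
                if_neg (by omega)]
              ring
        rw [Finset.sum_congr rfl (fun s _ => key s), Finset.sum_add_distrib]
        simp only [Finset.sum_ite_eq', Finset.mem_univ, if_true]
      · rw [dif_neg (by omega)]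
        have key : ∀ s : Fin n, Ematrix n I ⟨i, hi⟩ s * M s ⟨j, hj⟩ =
            (if s = (⟨i, hi⟩ : Fin n) then I ⟨i, hi⟩ * M ⟨i, hi⟩ ⟨j, hj⟩ else 0) := by
          rintro ⟨sv, hsv⟩
          simp only [Ematrix, Matrix.of_apply, Fin.mk.injEq]
          by_cases h1 : sv = i
          · subst h1; simp
          · rw [if_neg (by omega), if_neg (by omega), if_neg (by omega)]
            ring
        rw [Finset.sum_congr rfl (fun s _ => key s)]
        simp only [Finset.sum_ite_eq', Finset.mem_univ, if_true]
        ring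
    · rw [ent_oob (Or.inr (by omega)), ent_oob (Or.inr (by omega)),
        ent_oob (Or.inr (by omega))]
      ring
  · rw [ent_oob (Or.inl (by omega)), ent_oob (Or.inl (by omega)),
      ent_oob (Or.inl (by omega)), padded_ge I (by omega)]
    ring


lemma ent_diagdiff_mul (I'' I' : Fin n → ℝ) (P : Matrix (Fin n) (Fin n) ℝ) (i j : ℕ) :
    ent ((Ematrix n I'' - Ematrix n I') * P) i j
      = (padded I'' i - padded I' i) * ent P i j := by
  by_cases hi : i < n
  · by_cases hj : j < n
    · unfold ent
      rw [dif_pos ⟨hi, hj⟩, dif_pos ⟨hi, hj⟩, Matrix.mul_apply,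
        padded_lt I'' hi, padded_lt I' hi]
      have key : ∀ s : Fin n, (Ematrix n I'' - Ematrix n I') ⟨i, hi⟩ s * P s ⟨j, hj⟩ =
          (if s = (⟨i, hi⟩ : Fin n) then
            (I'' ⟨i, hi⟩ - I' ⟨i, hi⟩) * P ⟨i, hi⟩ ⟨j, hj⟩ else 0) := by
        rintro ⟨sv, hsv⟩
        simp only [Matrix.sub_apply, Ematrix, Matrix.of_apply, Fin.mk.injEq]
        by_cases h1 : sv = i
        · subst h1; simp
        · by_cases h2 : sv = i + 1
          · subst h2
            simp [h1]
          · simp [h1, h2]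
      rw [Finset.sum_congr rfl (fun s _ => key s)]
      simp only [Finset.sum_ite_eq', Finset.mem_univ, if_true]
    · rw [ent_oob (Or.inr (by omega)), ent_oob (Or.inr (by omega))]
      ring
  · rw [ent_oob (Or.inl (by omega)), ent_oob (Or.inl (by omega)),
      padded_ge I'' (by omega), padded_ge I' (by omega)]
    ring

end St10

namespace St10

variable {n : ℕ} (U : (m : ℕ) → Fin (n - (m+1)) → ℝ)

lemma prodFk_zero : prodFk n U 0 = genF n (fk n 1 (U 0)) := by
  rw [prodFk, Fk_eq_genF]

lemma prodFk_succ (N : ℕ) :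
    prodFk n U (N+1) = genF n (fk n (N+2) (U (N+1))) * prodFk n U N := by
  rw [prodFk, Fk_eq_genF]

lemma prodFk_congr (U' : (m : ℕ) → Fin (n - (m+1)) → ℝ) (N : ℕ)
    (h : ∀ m, m ≤ N → U m = U' m) : prodFk n U N = prodFk n U' N := by
  induction N with
  | zero => rw [prodFk, prodFk, h 0 (le_refl 0)]
  | succ N ih =>
      rw [prodFk, prodFk, h (N+1) (le_refl _), ih (fun m hm => h m (by omega))]

lemma ent_prodFk_upper (N : ℕ) : ∀ i j, i < j → ent (prodFk n U N) i j = 0 := by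
  induction N with
  | zero =>
      intro i j hij
      rw [prodFk_zero]
      exact ent_genF_of _ (by omega) (by omega)
  | succ N ih =>
      intro i j hij
      rw [prodFk_succ]
      by_cases hi : i < n
      · match i, hi with
        | 0, hi =>
            rw [ent_genF_mul_zero _ _ _ (by omega)]
            exact ih 0 j hij
        | (i'+1), hi =>
            rw [ent_genF_mul _ _ _ _ hi]
            rw [ih _ _ hij, ih i' j (by omega)]
            ring
      · exact ent_oob (Or.inl (by omega))

lemma ent_prodFk_diag (N : ℕ) : ∀ i, i < n → ent (prodFk n U N) i i = 1 := by
  induction N with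
  | zero =>
      intro i hi
      rw [prodFk_zero]
      exact ent_genF_diag _ hi
  | succ N ih =>
      intro i hi
      rw [prodFk_succ]
      match i, hi with
      | 0, hi =>
          rw [ent_genF_mul_zero _ _ _ (by omega)]
          exact ih 0 hi
      | (i'+1), hi =>
          rw [ent_genF_mul _ _ _ _ hi, ih _ hi,
            ent_prodFk_upper U N i' (i'+1) (by omega)]
          ring

lemma ent_prodFk_band (N : ℕ) : ∀ i j, j + N + 1 < i → ent (prodFk n U N) i j = 0 := by
  induction N with
  | zero =>
      intro i j hij
      rw [prodFk_zero]
      exact ent_genF_of _ (by omega) (by omega)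
  | succ N ih =>
      intro i j hij
      by_cases hi : i < n
      · rw [prodFk_succ]
        match i, hi, hij with
        | (i'+1), hi, hij =>
            rw [ent_genF_mul _ _ _ _ hi]
            rw [ih _ _ (by omega), ih i' j (by omega)]
            ring
      · exact ent_oob (Or.inl (by omega))

lemma ent_prodFk_bottom (N : ℕ) : ∀ j, j + N + 1 < n →
    ent (prodFk n U N) (j + N + 1) j
      = ∏ m ∈ Finset.range (N+1), (-(padded (U m) j)) := by
  induction N with
  | zero =>
      intro j hj
      rw [prodFk_zero, ent_genF_sub _ hj]
      simp [fk]
  | succ N ih =>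
      intro j hj
      rw [prodFk_succ]
      have e1 : j + (N+1) + 1 = (j + N + 1) + 1 := by omega
      rw [e1, ent_genF_mul _ _ _ _ (by omega)]
      rw [ent_prodFk_band U N _ _ (by omega), ih j (by omega)]
      have e2 : fk n (N+2) (U (N+1)) (j + N + 1) = padded (U (N+1)) j := by
        unfold fk
        rw [if_pos (by omega)]
        congr 1
        omega
      rw [e2]
      have e3 : (∏ m ∈ Finset.range (N+1+1), (-(padded (U m) j)))
          = (∏ m ∈ Finset.range (N+1), (-(padded (U m) j))) * (-(padded (U (N+1)) j)) :=
        Finset.prod_range_succ _ _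
      rw [e3]
      ring

lemma ent_prodFk_sign (N : ℕ) :
    (∀ m, m ≤ N → ∀ t, 0 ≤ padded (U m) t) →
    ∀ i j, 0 ≤ (-1 : ℝ)^(i - j) * ent (prodFk n U N) i j := by
  induction N with
  | zero =>
      intro hU i j
      rw [prodFk_zero]
      have hf : ∀ t, 0 ≤ fk n 1 (U 0) t := fk_nonneg (hU 0 (le_refl 0))
      by_cases hij : i = j
      · subst hij
        by_cases hi : i < n
        · rw [ent_genF_diag _ hi]; simp
        · rw [ent_oob (Or.inl (by omega))]; simp
      · by_cases hij2 : i = j + 1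
        · subst hij2
          by_cases hi : j + 1 < n
          · rw [ent_genF_sub _ hi, show j + 1 - j = 1 by omega, pow_one]
            have := hf j
            nlinarith
          · rw [ent_oob (Or.inl (by omega))]; simp
        · rw [ent_genF_of _ hij hij2]; simp
  | succ N ih =>
      intro hU i j
      rw [prodFk_succ]
      have hf : ∀ t, 0 ≤ fk n (N+2) (U (N+1)) t :=
        fk_nonneg (hU (N+1) (le_refl _))
      have ihs := ih (fun m hm => hU m (by omega))
      by_cases hi : i < n
      · match i, hi with
        | 0, hi =>
            rw [ent_genF_mul_zero _ _ _ (by omega)]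
            exact ihs 0 j
        | (i'+1), hi =>
            rw [ent_genF_mul _ _ _ _ hi]
            by_cases hj : i' < j
            · rw [ent_prodFk_upper U N i' j hj]
              simpa using ihs (i'+1) j
            · have e : i' + 1 - j = (i' - j) + 1 := by omega
              rw [e, pow_succ]
              have t1 := ihs (i'+1) j
              rw [e, pow_succ] at t1
              have t2 : 0 ≤ fk n (N+2) (U (N+1)) i' *
                  ((-1:ℝ)^(i' - j) * ent (prodFk n U N) i' j) :=
                mul_nonneg (hf i') (ihs i' j)
              nlinarith [t1, t2]
      · rw [ent_oob (Or.inl (by omega))]; simp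

end St10

namespace St10

variable {n : ℕ}

lemma diag_unique {A B P : Matrix (Fin n) (Fin n) ℝ} {I I'' I' : Fin n → ℝ}
    (hA : A * Ematrix n I = Ematrix n I'' * P)
    (hB : B * Ematrix n I = Ematrix n I' * P)
    (hAd : ∀ i, i < n → ent A i i = 1) (hBd : ∀ i, i < n → ent B i i = 1)
    (hPd : ∀ i, i < n → ent P i i = 1)
    (hPs : ∀ i j, 0 ≤ (-1 : ℝ)^(i - j) * ent P i j)
    (hI : ∀ i, 0 < I i) : I'' = I' := by
  have hIp : ∀ t, t < n → 0 < padded I t := fun t ht => by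
    rw [padded_lt I ht]; exact hI _
  have hDE : (A - B) * Ematrix n I = (Ematrix n I'' - Ematrix n I') * P := by
    rw [Matrix.sub_mul, Matrix.sub_mul, hA, hB]
  have hent : ∀ i j, ent ((A - B) * Ematrix n I) i j
      = (padded I'' i - padded I' i) * ent P i j := by
    intro i j; rw [hDE, ent_diagdiff_mul]
  have main : ∀ r, r < n → padded I'' r - padded I' r = 0 := by
    intro r hr
    match r, hr with
    | 0, hr =>
        have h0 := hent 0 0
        rw [ent_mul_E_zero _ _ _ (by omega), ent_sub, hAd 0 hr, hBd 0 hr,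
          hPd 0 hr] at h0
        linarith [h0]
    | (r'+1), hr =>
        obtain ⟨dr, hdr⟩ : ∃ d : ℝ, d = padded I'' (r'+1) - padded I' (r'+1) := ⟨_, rfl⟩
        have hrr := hent (r'+1) (r'+1)
        rw [ent_mul_E _ _ _ _ hr, hPd _ hr, ← hdr] at hrr
        have hstep : ∀ c, c ≤ r' → 0 ≤ (-1:ℝ)^(r'+1-c) * (dr * ent (A - B) (r'+1) c) := by
          intro c
          induction c with
          | zero =>
              intro _
              have h0 := hent (r'+1) 0
              rw [ent_mul_E_zero _ _ _ (by omega), ← hdr] at h0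
              have hP0 := hPs (r'+1) 0
              have hI0 := hIp 0 (by omega)
              have hexp : ent (A - B) (r'+1) 0 = dr * ent P (r'+1) 0 / padded I 0 := by
                rw [eq_div_iff hI0.ne']; linarith [h0]
              rw [hexp]
              rw [show (-1:ℝ)^(r'+1-0) * (dr * (dr * ent P (r'+1) 0 / padded I 0))
                  = dr^2 * ((-1:ℝ)^(r'+1-0) * ent P (r'+1) 0) / padded I 0 by ring]
              exact div_nonneg (by nlinarith [hP0, sq_nonneg dr]) hI0.le
          | succ c ihc =>
              intro hc
              have hcn : c + 1 < n := by omega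
              have h1 := hent (r'+1) (c+1)
              rw [ent_mul_E _ _ _ _ hcn, ← hdr] at h1
              have hPc := hPs (r'+1) (c+1)
              have hIc := hIp (c+1) hcn
              have ih2 := ihc (by omega)
              have e : r'+1-c = (r'+1-(c+1)) + 1 := by omega
              rw [e, pow_succ] at ih2
              have hexp : ent (A - B) (r'+1) (c+1)
                  = (dr * ent P (r'+1) (c+1) - ent (A - B) (r'+1) c) / padded I (c+1) := by
                rw [eq_div_iff hIc.ne']; linarith [h1]
              rw [hexp]
              rw [show (-1:ℝ)^(r'+1-(c+1)) * (dr * ((dr * ent P (r'+1) (c+1) - ent (A - B) (r'+1) c) / padded I (c+1)))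
                  = (dr^2 * ((-1:ℝ)^(r'+1-(c+1)) * ent P (r'+1) (c+1))
                    + (-1:ℝ)^(r'+1-(c+1)) * (-1) * (dr * ent (A - B) (r'+1) c)) / padded I (c+1) by ring]
              refine div_nonneg ?_ hIc.le
              nlinarith [hPc, sq_nonneg dr, ih2]
        have hlast := hstep r' (le_refl r')
        rw [show r'+1-r' = 1 by omega, pow_one] at hlast
        have hDrr : ent (A - B) (r'+1) r' = dr := by
          have hd : ent (A - B) (r'+1) (r'+1) = 0 := by
            rw [ent_sub, hAd _ hr, hBd _ hr]; ring
          rw [hd] at hrr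
          linarith [hrr]
        rw [hDrr] at hlast
        have h2 : dr * dr = 0 := le_antisymm (by linarith) (mul_self_nonneg dr)
        rw [hdr] at h2
        exact mul_self_eq_zero.mp h2
  funext i
  have h3 := main i i.2
  rw [padded_lt I'' i.2, padded_lt I' i.2] at h3
  have h2 : I'' ⟨(i:ℕ), i.2⟩ = I' ⟨(i:ℕ), i.2⟩ := by linarith
  simpa using h2

lemma cancelE {A B : Matrix (Fin n) (Fin n) ℝ} {I : Fin n → ℝ} (hI : ∀ i, 0 < I i)
    (h : A * Ematrix n I = B * Ematrix n I) : A = B := by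
  have hIp : ∀ t, t < n → padded I t ≠ 0 := fun t ht => by
    rw [padded_lt I ht]; exact (hI _).ne'
  have claim : ∀ j, j < n → ∀ i, ent A i j = ent B i j := by
    intro j
    induction j with
    | zero =>
        intro hj i
        have h0 := congrArg (fun M => ent M i 0) h
        rw [ent_mul_E_zero _ _ _ (by omega), ent_mul_E_zero _ _ _ (by omega)] at h0
        exact mul_right_cancel₀ (hIp 0 (by omega)) h0
    | succ j ihj =>
        intro hj i
        have h0 := congrArg (fun M => ent M i (j+1)) h
        rw [ent_mul_E _ _ _ _ hj, ent_mul_E _ _ _ _ hj] at h0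
        rw [ihj (by omega) i] at h0
        have h2 : ent A i (j+1) * padded I (j+1) = ent B i (j+1) * padded I (j+1) := by
          linarith [h0]
        exact mul_right_cancel₀ (hIp (j+1) hj) h2
  apply ent_ext
  intro i j hi hj
  exact claim j hj i

lemma cancelF {A B : Matrix (Fin n) (Fin n) ℝ} (f : ℕ → ℝ)
    (h : genF n f * A = genF n f * B) : A = B := by
  have claim : ∀ i, i < n → ∀ j, ent A i j = ent B i j := by
    intro i
    induction i with
    | zero =>
        intro hi j
        have h0 := congrArg (fun M => ent M 0 j) h
        rwa [ent_genF_mul_zero _ _ _ hi, ent_genF_mul_zero _ _ _ hi] at h0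
    | succ i ihi =>
        intro hi j
        have h0 := congrArg (fun M => ent M (i+1) j) h
        rw [ent_genF_mul _ _ _ _ hi, ent_genF_mul _ _ _ _ hi] at h0
        rw [ihi (by omega) j] at h0
        linarith [h0]
  apply ent_ext
  intro i j hi hj
  exact claim i hi j

lemma peelF {f g : ℕ → ℝ} {Q1 Q2 : Matrix (Fin n) (Fin n) ℝ} (N : ℕ)
    (heq : genF n f * Q1 = genF n g * Q2)
    (hf0 : ∀ t, t + 1 < N + 2 → f t = 0) (hf1 : ∀ t, n ≤ t + 1 → f t = 0)
    (hg0 : ∀ t, t + 1 < N + 2 → g t = 0) (hg1 : ∀ t, n ≤ t + 1 → g t = 0)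
    (hQ1 : ∀ i j, j + N + 1 < i → ent Q1 i j = 0)
    (hQ2 : ∀ i j, j + N + 1 < i → ent Q2 i j = 0)
    (hQ2b : ∀ j, j + N + 1 < n → ent Q2 (j + N + 1) j ≠ 0) :
    f = g ∧ Q1 = Q2 := by
  classical
  have hfg : f = g := by
    by_contra hne
    have hex : ∃ t, f t ≠ g t := by
      by_contra hall; push_neg at hall; exact hne (funext hall)
    have hi0 : f (Nat.find hex) ≠ g (Nat.find hex) := Nat.find_spec hex
    set i0 := Nat.find hex with hi0def
    have hmin : ∀ t, t < i0 → f t = g t := fun t ht =>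
      not_ne_iff.mp (Nat.find_min hex ht)
    have hlarge : i0 + 1 < n := by
      by_contra hcon
      exact hi0 (by rw [hf1 i0 (by omega), hg1 i0 (by omega)])
    have hsmall : N + 1 ≤ i0 := by
      by_contra hcon
      exact hi0 (by rw [hf0 i0 (by omega), hg0 i0 (by omega)])
    have hrows : ∀ i, i ≤ i0 → ∀ j, ent Q1 i j = ent Q2 i j := by
      intro i
      induction i with
      | zero =>
          intro _ j
          have h0 := congrArg (fun M => ent M 0 j) heq
          rwa [ent_genF_mul_zero _ _ _ (by omega), ent_genF_mul_zero _ _ _ (by omega)] at h0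
      | succ i ihi =>
          intro hile j
          have h0 := congrArg (fun M => ent M (i+1) j) heq
          rw [ent_genF_mul _ _ _ _ (by omega), ent_genF_mul _ _ _ _ (by omega)] at h0
          rw [hmin i (by omega), ihi (by omega) j] at h0
          linarith [h0]
    have h0 := congrArg (fun M => ent M (i0+1) (i0 - (N+1))) heq
    rw [ent_genF_mul _ _ _ _ hlarge, ent_genF_mul _ _ _ _ hlarge] at h0
    rw [hQ1 (i0+1) (i0 - (N+1)) (by omega), hQ2 (i0+1) (i0 - (N+1)) (by omega),
      hrows i0 (le_refl _) (i0 - (N+1))] at h0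
    have hb := hQ2b (i0 - (N+1)) (by omega)
    rw [show i0 - (N+1) + N + 1 = i0 by omega] at hb
    exact hi0 (mul_right_cancel₀ hb (by linarith [h0]))
  subst hfg
  exact ⟨rfl, cancelF f heq⟩

end St10

namespace St10

variable {n : ℕ}

noncomputable def stepI (J : Fin n → ℝ) (f : ℕ → ℝ) : Fin n → ℝ := fun r =>
  if (r : ℕ) = 0 then J r + f 0
  else (J r + f (r : ℕ)) * padded J ((r : ℕ) - 1) / (padded J ((r : ℕ) - 1) + f ((r : ℕ) - 1))

noncomputable def stepf (J : Fin n → ℝ) (f : ℕ → ℝ) : ℕ → ℝ := fun c =>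
  if c + 1 < n then padded (stepI J f) (c + 1) * f c / padded J c else 0

lemma stepI_pos (J : Fin n → ℝ) (f : ℕ → ℝ) (hJ : ∀ i, 0 < J i) (hf : ∀ t, 0 ≤ f t) :
    ∀ r, 0 < stepI J f r := by
  intro r
  unfold stepI
  split_ifs with h
  · have := hf 0; have := hJ r; linarith
  · have hr1 : (r : ℕ) - 1 < n := by have := r.2; omega
    have hp : 0 < padded J ((r:ℕ)-1) := by rw [padded_lt _ hr1]; exact hJ _
    have h1 : 0 < J r + f (r:ℕ) := by have := hf (r:ℕ); have := hJ r; linarith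
    have h2 : 0 < padded J ((r:ℕ)-1) + f ((r:ℕ)-1) := by have := hf ((r:ℕ)-1); linarith
    exact div_pos (mul_pos h1 hp) h2

lemma step_exchange (J : Fin n → ℝ) (f : ℕ → ℝ) (hJ : ∀ i, 0 < J i)
    (hf : ∀ t, 0 ≤ f t) (hff : ∀ t, n ≤ t + 1 → f t = 0) :
    genF n (stepf J f) * Ematrix n J = Ematrix n (stepI J f) * genF n f := by
  have hJp : ∀ t, t < n → 0 < padded J t := fun t ht => by
    rw [padded_lt _ ht]; exact hJ _
  have hsubf : ∀ t s, s = t + 1 → ent (genF n f) s t = -(f t) := by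
    intro t s hs; subst hs
    by_cases h : t + 1 < n
    · exact ent_genF_sub f h
    · rw [ent_oob (Or.inl (by omega)), hff t (by omega), neg_zero]
  have hsubf' : ∀ t s, s = t + 1 → ent (genF n (stepf J f)) s t = -(stepf J f t) := by
    intro t s hs; subst hs
    by_cases h : t + 1 < n
    · exact ent_genF_sub _ h
    · rw [ent_oob (Or.inl (by omega))]
      unfold stepf; rw [if_neg h, neg_zero]
  have step_sub : ∀ c s, s = c + 1 → c + 1 < n →
      stepf J f c * padded J c = padded (stepI J f) s * f c := by
    intro c s hs hc; subst hs
    have hJc := hJp c (by omega)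
    unfold stepf
    rw [if_pos hc, div_mul_cancel₀ _ hJc.ne']
  have step_key : ∀ c, c + 1 < n →
      padded (stepI J f) (c+1) + stepf J f c = padded J (c+1) + f (c+1) := by
    intro c hc
    have hJc := hJp c (by omega)
    have hden : 0 < padded J c + f c := by have := hf c; linarith
    have hstep : stepI J f ⟨c+1, hc⟩
        = (J ⟨c+1, hc⟩ + f (c+1)) * padded J c / (padded J c + f c) := by
      simp only [stepI]
      rw [if_neg (by simp)]
      norm_num
    rw [padded_lt (stepI J f) hc, padded_lt J hc]
    unfold stepf
    rw [if_pos hc, padded_lt (stepI J f) hc, hstep]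
    field_simp
  apply ent_ext
  intro i j hi hj
  rcases j with _ | c
  · rw [ent_mul_E_zero _ _ _ (by omega), ent_E_mul]
    rcases i with _ | i'
    · rw [ent_genF_diag _ hi, ent_genF_diag _ hi, hsubf 0 (0+1) rfl]
      have h00 : padded (stepI J f) 0 = J ⟨0, hi⟩ + f 0 := by
        rw [padded_lt _ hi]; simp [stepI]
      rw [h00, padded_lt J hi]
      ring
    · by_cases hi1 : i' = 0
      · subst hi1
        rw [hsubf' 0 (0+1) rfl, hsubf 0 (0+1) rfl,
          ent_genF_of f (by omega) (by omega)]
        have hkey := step_sub 0 (0+1) rfl (by omega)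
        linarith [hkey]
      · rw [ent_genF_of _ (by omega) (by omega), ent_genF_of f (by omega) (by omega),
          ent_genF_of f (by omega) (by omega)]
        ring
  · rw [ent_mul_E _ _ _ _ hj, ent_E_mul]
    rcases lt_trichotomy i (c+1) with hlt | heq | hgt
    · by_cases hic : i = c
      · subst hic
        rw [ent_genF_of _ (by omega) (by omega), ent_genF_diag _ (by omega),
          ent_genF_of f (by omega) (by omega), ent_genF_diag f hj]
        ring
      · rw [ent_genF_of _ (by omega) (by omega), ent_genF_of _ (by omega) (by omega),
          ent_genF_of f (by omega) (by omega), ent_genF_of f (by omega) (by omega)]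
        ring
    · subst heq
      rw [ent_genF_diag _ hi, hsubf' c (c+1) rfl, ent_genF_diag f hi,
        hsubf (c+1) (c+1+1) rfl]
      have hkey := step_key c hj
      linarith [hkey]
    · by_cases hic : i = c + 2
      · subst hic
        rw [hsubf' (c+1) (c+2) (by omega), ent_genF_of _ (by omega) (by omega),
          hsubf (c+1) (c+2) (by omega), ent_genF_of f (by omega) (by omega)]
        have hkey := step_sub (c+1) (c+2) (by omega) hi
        linarith [hkey]
      · rw [ent_genF_of _ (by omega) (by omega), ent_genF_of _ (by omega) (by omega),
          ent_genF_of f (by omega) (by omega), ent_genF_of f (by omega) (by omega)]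
        ring

lemma single_step (k : ℕ) (hk : 1 ≤ k) (J : Fin n → ℝ) (hJ : ∀ i, 0 < J i)
    (V : Fin (n - k) → ℝ) (hV : ∀ t, 0 < V t) :
    ∃ (I' : Fin n → ℝ) (V' : Fin (n - k) → ℝ),
      Fkmatrix n k V' * Ematrix n J = Ematrix n I' * Fkmatrix n k V ∧
      (∀ i, 0 < I' i) ∧ (∀ t, 0 < V' t) := by
  have hVnn : ∀ t, 0 ≤ padded V t := padded_nonneg (fun t => (hV t).le)
  have hfnn : ∀ t, 0 ≤ fk n k V t := fk_nonneg hVnn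
  have hff : ∀ t, n ≤ t + 1 → fk n k V t = 0 := fun t ht => fk_far V ht
  have hzero : ∀ t, t + 1 < k → stepf J (fk n k V) t = 0 := by
    intro t ht
    unfold stepf
    split_ifs with h
    · rw [fk_near V ht]
      ring
    · rfl
  refine ⟨stepI J (fk n k V), fun t : Fin (n-k) => stepf J (fk n k V) ((t : ℕ) + k - 1),
    ?_, stepI_pos J _ hJ hfnn, ?_⟩
  · have h1 := genF_eq_Fk (n := n) hk (stepf J (fk n k V)) hzero
    have hx := step_exchange J (fk n k V) hJ hfnn hff
    rw [h1] at hx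
    rw [hx, Fk_eq_genF]
  · intro t
    have htn : (t:ℕ) + k < n := by have := t.2; omega
    have hc : ((t:ℕ) + k - 1) + 1 < n := by omega
    have hfpos : 0 < fk n k V ((t:ℕ) + k - 1) := by
      unfold fk
      rw [if_pos (by omega), padded_lt V (show (t:ℕ)+k-1+1-k < n - k by omega)]
      exact hV _
    show 0 < stepf J (fk n k V) ((t:ℕ) + k - 1)
    unfold stepf
    rw [if_pos hc]
    apply div_pos (mul_pos ?_ hfpos) ?_
    · rw [padded_lt (stepI J (fk n k V)) hc]
      exact stepI_pos J _ hJ hfnn _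
    · rw [padded_lt J (show (t:ℕ)+k-1 < n by omega)]
      exact hJ _

end St10

namespace St10

theorem AUX (n : ℕ) (N : ℕ) (I : Fin n → ℝ) (hI : ∀ i, 0 < I i)
    (U : (m : ℕ) → Fin (n - (m+1)) → ℝ) :
    (∀ m, m ≤ N → ∀ i, 0 < U m i) →
    ∃ (I' : Fin n → ℝ) (U' : (m : ℕ) → Fin (n - (m+1)) → ℝ),
      prodFk n U' N * Ematrix n I = Ematrix n I' * prodFk n U N ∧
      (∀ i, 0 < I' i) ∧ (∀ m, m ≤ N → ∀ i, 0 < U' m i) ∧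
      ∀ (I'' : Fin n → ℝ) (U'' : (m : ℕ) → Fin (n - (m+1)) → ℝ),
        prodFk n U'' N * Ematrix n I = Ematrix n I'' * prodFk n U N →
        I'' = I' ∧ ∀ m, m ≤ N → U'' m = U' m := by
  induction N with
  | zero =>
      intro hU
      have hUnn : ∀ m, m ≤ 0 → ∀ t, 0 ≤ padded (U m) t :=
        fun m hm => padded_nonneg (fun i => (hU m hm i).le)
      obtain ⟨I', V', heq, hI', hV'⟩ :=
        single_step 1 (le_refl 1) I hI (U 0) (hU 0 (le_refl 0))
      have heqP : prodFk n (Function.update (fun m => (fun _ => (0:ℝ))) 0 V') 0 * Ematrix n I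
          = Ematrix n I' * prodFk n U 0 := by
        show Fkmatrix n 1 (Function.update (fun m => (fun _ => (0:ℝ))) 0 V' 0) * Ematrix n I
          = Ematrix n I' * Fkmatrix n 1 (U 0)
        rw [Function.update_self]
        exact heq
      refine ⟨I', Function.update (fun m => (fun _ => (0:ℝ))) 0 V', heqP, hI', ?_, ?_⟩
      · intro m hm i
        have hm0 : m = 0 := by omega
        subst hm0
        rw [Function.update_self]
        exact hV' i
      · intro I'' U'' h''
        have hIeq : I'' = I' :=
          diag_unique h'' heqP (ent_prodFk_diag U'' 0)
            (ent_prodFk_diag _ 0) (ent_prodFk_diag U 0)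
            (ent_prodFk_sign U 0 hUnn) hI
        refine ⟨hIeq, ?_⟩
        intro m hm
        have hm0 : m = 0 := by omega
        subst hm0
        rw [hIeq] at h''
        have hPP := h''.trans heqP.symm
        have hcan := cancelE hI hPP
        show U'' 0 = Function.update (fun m => (fun _ => (0:ℝ))) 0 V' 0
        rw [Function.update_self]
        have hcan2 : Fkmatrix n 1 (U'' 0) = Fkmatrix n 1 V' := by
          have : prodFk n U'' 0 = Fkmatrix n 1 (U'' 0) := rfl
          rw [← this, hcan]
          show prodFk n _ 0 = _
          rw [prodFk, Function.update_self]
        rw [Fk_eq_genF, Fk_eq_genF] at hcan2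
        funext t
        have ht : (t:ℕ) + 1 < n := by have := t.2; omega
        have h2 := congrArg (fun M => ent M ((t:ℕ)+1) (t:ℕ)) hcan2
        rw [ent_genF_sub _ ht, ent_genF_sub _ ht] at h2
        have hfk : ∀ W : Fin (n-1) → ℝ, fk n 1 W (t:ℕ) = W t := by
          intro W
          unfold fk
          rw [if_pos (by omega), show (t:ℕ)+1-1 = (t:ℕ) by omega,
            padded_lt W (by have := t.2; omega)]
        rw [hfk, hfk] at h2
        linarith [h2]
  | succ N ih =>
      intro hU
      have hUnn : ∀ m, m ≤ N + 1 → ∀ t, 0 ≤ padded (U m) t :=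
        fun m hm => padded_nonneg (fun i => (hU m hm i).le)
      obtain ⟨J, U1, eqN, hJ, hU1, uniqN⟩ := ih (fun m hm i => hU m (by omega) i)
      obtain ⟨I', B, eqS, hI', hB⟩ :=
        single_step (N+2) (by omega) J hJ (U (N+1)) (hU (N+1) (le_refl _))
      have hup1 : Function.update U1 (N+1) B (N+1) = B := Function.update_self _ _ _
      have hup2 : ∀ m, m ≤ N → Function.update U1 (N+1) B m = U1 m :=
        fun m hm => Function.update_of_ne (by omega) B U1
      have hprod : prodFk n (Function.update U1 (N+1) B) N = prodFk n U1 N :=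
        prodFk_congr _ _ N (fun m hm => hup2 m hm)
      have heqP : prodFk n (Function.update U1 (N+1) B) (N+1) * Ematrix n I
          = Ematrix n I' * prodFk n U (N+1) := by
        show (Fkmatrix n (N+2) (Function.update U1 (N+1) B (N+1))
            * prodFk n (Function.update U1 (N+1) B) N) * Ematrix n I
          = Ematrix n I' * (Fkmatrix n (N+2) (U (N+1)) * prodFk n U N)
        rw [hup1, hprod, mul_assoc, eqN, ← mul_assoc, eqS, mul_assoc]
      refine ⟨I', Function.update U1 (N+1) B, heqP, hI', ?_, ?_⟩
      · intro m hm i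
        by_cases hmN : m = N + 1
        · subst hmN
          rw [hup1]
          exact hB i
        · rw [hup2 m (by omega)]
          exact hU1 m (by omega) i
      · intro I'' U'' h''
        have hIeq : I'' = I' :=
          diag_unique h'' heqP (ent_prodFk_diag U'' (N+1))
            (ent_prodFk_diag _ (N+1)) (ent_prodFk_diag U (N+1))
            (ent_prodFk_sign U (N+1) hUnn) hI
        rw [hIeq] at h''
        have hcan := cancelE hI (h''.trans heqP.symm)
        have hcan2 : genF n (fk n (N+2) (U'' (N+1))) * prodFk n U'' N
            = genF n (fk n (N+2) B) * prodFk n U1 N := by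
          rw [← prodFk_succ, hcan, prodFk_succ, hup1, hprod]
        have hbot : ∀ j, j + N + 1 < n → ent (prodFk n U1 N) (j + N + 1) j ≠ 0 := by
          intro j hj
          rw [ent_prodFk_bottom U1 N j hj]
          apply Finset.prod_ne_zero_iff.mpr
          intro m hm
          have hm' : m < N + 1 := Finset.mem_range.mp hm
          have hp : 0 < padded (U1 m) j := by
            rw [padded_lt _ (by omega : j < n - (m+1))]
            exact hU1 m (by omega) _
          exact neg_ne_zero.mpr hp.ne'
        obtain ⟨hfeq, hQeq⟩ := peelF N hcan2
          (fun t ht => fk_near _ ht) (fun t ht => fk_far _ ht)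
          (fun t ht => fk_near _ ht) (fun t ht => fk_far _ ht)
          (ent_prodFk_band U'' N) (ent_prodFk_band U1 N) hbot
        have hUN1 : U'' (N+1) = B := by
          funext t
          have h2 := congrFun hfeq ((t:ℕ) + N + 1)
          have hcond : N + 2 ≤ (t:ℕ) + N + 1 + 1 := by omega
          unfold fk at h2
          rw [if_pos hcond, if_pos hcond] at h2
          have hidx : (t:ℕ) + N + 1 + 1 - (N+2) = (t:ℕ) := by omega
          rw [hidx, padded_lt _ t.2, padded_lt _ t.2] at h2
          simpa using h2
        have huse : prodFk n U'' N * Ematrix n I = Ematrix n J * prodFk n U N := by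
          rw [hQeq]
          exact eqN
        obtain ⟨_, hUm⟩ := uniqN J U'' huse
        refine ⟨hIeq, ?_⟩
        intro m hm
        by_cases hmN : m = N + 1
        · subst hmN
          rw [hup1]
          exact hUN1
        · rw [hup2 m (by omega)]
          exact hUm m (by omega)

end St10


/- STATEMENT 10: for a positive vector I (length n) and positive vectors U_m
(1 ≤ m ≤ N+1, `U m` encodes U_{m+1}), there exist a unique I' and unique
vectors U'_m (1 ≤ m ≤ N+1) with
F_{N+1}(U'_{N+1})⋯F_1(U'_1)E(I) = E(I')F_{N+1}(U_{N+1})⋯F_1(U_1),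
and all entries of I' and the U'_m are positive. -/
theorem exists_unique_prodFk_E_exchange (n N : ℕ) (hn : 1 ≤ n) (hN : N ≤ n - 1)
    (I : Fin n → ℝ) (hI : ∀ i, 0 < I i)
    (U : (m : ℕ) → Fin (n - (m+1)) → ℝ) (hU : ∀ m, m ≤ N → ∀ i, 0 < U m i) :
    ∃ (I' : Fin n → ℝ) (U' : (m : ℕ) → Fin (n - (m+1)) → ℝ),
      prodFk n U' N * Ematrix n I = Ematrix n I' * prodFk n U N ∧
      (∀ i, 0 < I' i) ∧ (∀ m, m ≤ N → ∀ i, 0 < U' m i) ∧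
      ∀ (I'' : Fin n → ℝ) (U'' : (m : ℕ) → Fin (n - (m+1)) → ℝ),
        prodFk n U'' N * Ematrix n I = Ematrix n I'' * prodFk n U N →
        I'' = I' ∧ ∀ m, m ≤ N → U'' m = U' m := by
  exact St10.AUX n N I hI U hU
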